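/- arXiv:1604.05885 — 3 statements merged into one kernel-verified Lean document; each statement's English description precedes it below -/
import Mathlib

section
/- Let p be a prime, n ≥ 2, and V = (ℤ/pℤ)ⁿ viewed as a vector space over the field with p elements. Let B be a basis of V, K = {0} × B ⊆ ℝ × V, and W = [-1,1] × {0}. Then there is no element (r, v) ∈ ℝ × V such that K ⊆ W + ℤ·(r, v). -/
open Pointwise

/-- Let `p` be a prime, `n ≥ 2`, `V = (ℤ/pℤ)ⁿ`, `B` a basis of `V` over `ℤ/pℤ`,
`K = {0} × B ⊆ ℝ × V` and `W = [-1,1] × {0}`.  Then there is no `(r, v) ∈ ℝ × V`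
with `K ⊆ W + ℤ·(r, v)`. -/
theorem no_cyclic_approximation_R_times_Zp_pow (p n : ℕ) (hp : p.Prime) (hn : 2 ≤ n)
    (B : Module.Basis (Fin n) (ZMod p) (Fin n → ZMod p)) :
    ¬ ∃ (r : ℝ) (v : Fin n → ZMod p),
      (({0} : Set ℝ) ×ˢ Set.range ⇑B) ⊆
        ((Set.Icc (-1 : ℝ) 1) ×ˢ ({0} : Set (Fin n → ZMod p))) +
          Set.range (fun k : ℤ => k • ((r, v) : ℝ × (Fin n → ZMod p))) := by
  haveI := Fact.mk hp
  rintro ⟨r, v, hK⟩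
  set i0 : Fin n := ⟨0, by omega⟩
  set i1 : Fin n := ⟨1, by omega⟩
  -- extract multiples for each basis vector
  have key : ∀ i : Fin n, ∃ a : ZMod p, B i = a • v := by
    intro i
    have hmem : ((0 : ℝ), B i) ∈
        ((Set.Icc (-1 : ℝ) 1) ×ˢ ({0} : Set (Fin n → ZMod p))) +
          Set.range (fun k : ℤ => k • ((r, v) : ℝ × (Fin n → ZMod p))) :=
      hK ⟨rfl, ⟨i, rfl⟩⟩
    rcases hmem with ⟨⟨w, z⟩, ⟨hw, hz⟩, y, ⟨k, hk⟩, heq⟩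
    refine ⟨(k : ZMod p), ?_⟩
    rw [← hk] at heq
    have h2 : z + (k • ((r, v) : ℝ × (Fin n → ZMod p))).2 = B i :=
      congrArg Prod.snd heq
    simp only [Set.mem_singleton_iff] at hz
    subst hz
    simp only [Prod.smul_snd, zero_add] at h2
    rw [← h2, ← Int.cast_smul_eq_zsmul (ZMod p)]
  obtain ⟨a, ha⟩ := key i0
  obtain ⟨b, hb⟩ := key i1
  have hind : LinearIndependent (ZMod p) ![B i0, B i1] := by
    have hinj : Function.Injective ![i0, i1] := by
      intro x y hxy
      fin_cases x <;> fin_cases y <;> simp_all [i0, i1]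
    have := B.linearIndependent.comp ![i0, i1] hinj
    convert this using 1
    ext x
    fin_cases x <;> simp
    rfl
  rw [LinearIndependent.pair_iff] at hind
  have hzero : b • B i0 + (-a) • B i1 = 0 := by
    rw [ha, hb]
    module
  obtain ⟨hb0, ha0⟩ := hind b (-a) hzero
  have : a = 0 := by simpa using ha0
  rw [this, zero_smul] at ha
  exact B.ne_zero i0 ha
end

section
/- Let G be a locally compact group and (H_i)_{i∈I} a net of connected closed subgroups converging in the Chabauty topology to a closed subgroup H. Then H is contained in the identity component G₀ of G. -/
open Pointwise Filter

/-- Chabauty convergence of a net of closed subgroups of a locally compact group. -/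
def ChabautyTendsto {G ι : Type*} [Group G] [TopologicalSpace G]
    (H : ι → Subgroup G) (l : Filter ι) (L : Subgroup G) : Prop :=
  ∀ K : Set G, IsCompact K → ∀ W ∈ nhds (1 : G), ∀ᶠ i in l,
    (H i : Set G) ∩ K ⊆ W * (L : Set G) ∧ (L : Set G) ∩ K ⊆ W * (H i : Set G)

/-- The Chabauty limit of a net of connected closed subgroups is contained in the
identity component. -/
theorem chabauty_limit_of_connected_subset_identityComponent
    {G ι : Type*} [Group G] [TopologicalSpace G] [IsTopologicalGroup G]
    [LocallyCompactSpace G] (l : Filter ι) [l.NeBot]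
    (H : ι → Subgroup G) (hHc : ∀ i, IsClosed (H i : Set G))
    (hconn : ∀ i, IsConnected (H i : Set G))
    (L : Subgroup G) (hLc : IsClosed (L : Set G))
    (hlim : ChabautyTendsto H l L) :
    (L : Set G) ⊆ connectedComponent (1 : G) := by
  intro x hx
  have hG0 : IsClosed (connectedComponent (1 : G)) := isClosed_connectedComponent
  rw [← hG0.closure_eq, mem_closure_iff_nhds]
  intro U hU
  have hcont : Continuous fun w : G => w⁻¹ * x := continuous_inv.mul continuous_const
  have hW : (fun w : G => w⁻¹ * x) ⁻¹' U ∈ nhds (1 : G) := by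
    apply hcont.continuousAt.preimage_mem_nhds
    simpa using hU
  obtain ⟨i, hi⟩ := (hlim {x} isCompact_singleton _ hW).exists
  have hxmem : x ∈ ((fun w : G => w⁻¹ * x) ⁻¹' U) * (H i : Set G) :=
    hi.2 ⟨hx, rfl⟩
  obtain ⟨w, hw, h, hh, hwh⟩ := hxmem
  refine ⟨h, ?_, ?_⟩
  · have hwU : w⁻¹ * x ∈ U := hw
    rwa [← hwh, ← mul_assoc, inv_mul_cancel, one_mul] at hwU
  · exact (hconn i).isPreconnected.subset_connectedComponent (H i).one_mem hh
end

section
/- For each n ∈ ℕ, let Z_n = ℤ·(1/n, id_𝕋) be the cyclic subgroup of G = ℝ × b(ℤ) generated by (1/n, id_𝕋), where b(ℤ) is the Bohr compactification of ℤ identified with the dual of the discretized circle 𝕋_d, and id_𝕋 ∈ b(ℤ) is the identity character. Identify the dual Ĝ with ℝ × 𝕋_d. Then an element (r, s̄) ∈ ℝ × 𝕋_d lies in the annihilator Z_n^⊥ if and only if r/n − s ∈ ℤ, and the sequence of annihilators (Z_n^⊥)_{n∈ℕ} converges to the trivial subgroup {0} in the Chabauty topology on closed subgroups of ℝ × 𝕋_d.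 -/
open Pointwise Filter

/-- `𝕋_d`: the circle `ℝ/ℤ` with the discrete topology. -/
def Td : Type := AddCircle (1 : ℝ)

noncomputable instance : AddCommGroup Td := inferInstanceAs (AddCommGroup (AddCircle (1 : ℝ)))
instance : TopologicalSpace Td := ⊥
instance : DiscreteTopology Td := ⟨rfl⟩
instance : IsTopologicalAddGroup Td where
  continuous_add := continuous_of_discreteTopology
  continuous_neg := continuous_of_discreteTopology

/-- The identity map `𝕋_d → 𝕋`, as an additive homomorphism. -/
noncomputable def Td.toCircle : Td →+ AddCircle (1 : ℝ) :=
  AddMonoidHom.mk' (fun t => (t : AddCircle (1 : ℝ))) fun _ _ => rfl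

/-- The identity map `𝕋 → 𝕋_d`. -/
def Td.ofCircle : AddCircle (1 : ℝ) → Td := fun t => t

/-- The Bohr compactification `b(ℤ)` of `ℤ`, realized as the Pontryagin dual of `𝕋_d`. -/
abbrev BohrZ : Type _ := ContinuousAddMonoidHom Td (AddCircle (1 : ℝ))

/-- The distinguished generator `id_𝕋 ∈ b(ℤ)`: the identity character of `𝕋_d`. -/
noncomputable def idChar : BohrZ := { Td.toCircle with continuous_toFun := continuous_of_discreteTopology }

/-- `Z_n = ℤ·(1/n, id_𝕋))`, the cyclic subgroup of `ℝ × b(ℤ)` generated by `(1/n, id_𝕋)`. -/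
def Zn (n : ℕ) : Set (ℝ × BohrZ) :=
  {z | ∃ k : ℤ, z = k • (((n : ℝ)⁻¹, idChar) : ℝ × BohrZ)}

/-- The annihilator `Z_n^⊥` inside the dual `ℝ × 𝕋_d` of `ℝ × b(ℤ)`, the dual pairing
being `(r, s̄)(x, χ) = ↑(r·x) - χ(s̄)`. -/
def ZnPerp (n : ℕ) : Set (ℝ × Td) :=
  {q | ∀ z ∈ Zn n, ((q.1 * z.1 : ℝ) : AddCircle (1 : ℝ)) - z.2 q.2 = 0}

/-- Chabauty convergence of a sequence of subsets (closed subgroups) of a locally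
compact additive group, via the standard neighborhood basis. -/
def ChabautyTendstoSet {G ι : Type*} [AddGroup G] [TopologicalSpace G]
    (H : ι → Set G) (l : Filter ι) (L : Set G) : Prop :=
  ∀ K : Set G, IsCompact K → ∀ W ∈ nhds (0 : G), ∀ᶠ i in l,
    H i ∩ K ⊆ W + L ∧ L ∩ K ⊆ W + H i

/-- Evaluation at a point, as an additive homomorphism on `BohrZ`. -/
noncomputable def evalHom (t : Td) : BohrZ →+ AddCircle (1 : ℝ) :=
  AddMonoidHom.mk' (fun f => f t) (fun _ _ => rfl)

lemma zsmul_apply (k : ℤ) (f : BohrZ) (t : Td) : (k • f) t = k • (f t) :=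
  map_zsmul (evalHom t) k f

lemma mem_ZnPerp_iff {n : ℕ} (r : ℝ) (t : Td) :
    (r, t) ∈ ZnPerp n ↔ ((r * (n : ℝ)⁻¹ : ℝ) : AddCircle (1 : ℝ)) = idChar t := by
  constructor
  · intro h
    have h1 := h ((1 : ℤ) • (((n : ℝ)⁻¹, idChar) : ℝ × BohrZ)) ⟨1, rfl⟩
    simp only [one_smul] at h1
    exact sub_eq_zero.mp h1
  · rintro h z ⟨k, rfl⟩
    simp only [Prod.smul_fst, Prod.smul_snd]
    rw [zsmul_apply]
    have h1 : r * (k • (n : ℝ)⁻¹) = k • (r * (n : ℝ)⁻¹) := by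
      rw [zsmul_eq_mul, zsmul_eq_mul]; ring
    rw [h1, QuotientAddGroup.mk_zsmul, ← smul_sub, sub_eq_zero.mpr h, smul_zero]

lemma exists_delta {t : AddCircle (1 : ℝ)} (ht : t ≠ 0) :
    ∃ δ > 0, ∀ x : ℝ, (x : AddCircle (1 : ℝ)) = t → δ ≤ |x| := by
  obtain ⟨s, rfl⟩ := QuotientAddGroup.mk_surjective t
  set a := Int.fract s with ha_def
  have ha : ((a : ℝ) : AddCircle (1 : ℝ)) = ↑s := by
    rw [QuotientAddGroup.eq_iff_sub_mem]
    exact ⟨-⌊s⌋, by show ((-⌊s⌋ : ℤ) • (1:ℝ)) = a - s; rw [zsmul_eq_mul, mul_one, ha_def, Int.fract]; push_cast; ring⟩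
  have h0 : 0 < a := by
    rcases lt_or_eq_of_le (Int.fract_nonneg s) with h | h
    · exact h
    · exfalso; apply ht; rw [← ha, ha_def, ← h]; norm_num
  have h1 : a < 1 := Int.fract_lt_one s
  refine ⟨min a (1 - a), lt_min h0 (by linarith), ?_⟩
  intro x hx
  have hmem : x - a ∈ AddSubgroup.zmultiples (1 : ℝ) :=
    QuotientAddGroup.eq_iff_sub_mem.mp (hx.trans ha.symm)
  obtain ⟨m, hm⟩ := AddSubgroup.mem_zmultiples_iff.mp hmem
  rw [zsmul_eq_mul, mul_one] at hm
  rcases le_or_gt 0 m with h | h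
  · have hm0 : (0 : ℝ) ≤ m := by exact_mod_cast h
    have : a ≤ x := by linarith
    rw [abs_of_pos (by linarith)]
    exact le_trans (min_le_left _ _) this
  · have hm1' : m ≤ -1 := by omega
    have hm1 : (m : ℝ) ≤ -1 := by exact_mod_cast hm1'
    have : x ≤ a - 1 := by linarith
    rw [abs_of_neg (by linarith)]
    have := min_le_right a (1 - a); linarith

lemma coe_eq_zero_iff' (x : ℝ) :
    ((x : AddCircle (1 : ℝ)) = 0) ↔ ∃ m : ℤ, (m : ℝ) = x := by
  rw [show (0 : AddCircle (1 : ℝ)) = ((0 : ℝ) : AddCircle (1 : ℝ)) by rfl,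
    QuotientAddGroup.eq_iff_sub_mem, sub_zero]
  constructor
  · rintro h
    obtain ⟨m, hm⟩ := AddSubgroup.mem_zmultiples_iff.mp h
    exact ⟨m, by rw [← hm, zsmul_eq_mul, mul_one]⟩
  · rintro ⟨m, rfl⟩
    exact AddSubgroup.mem_zmultiples_iff.mpr ⟨m, by rw [zsmul_eq_mul, mul_one]⟩

/-- `(r, s̄) ∈ Z_n^⊥` iff `r/n - s ∈ ℤ`, and the sequence of annihilators `(Z_n^⊥)`
converges to the trivial subgroup `{0}` in the Chabauty topology on `ℝ × 𝕋_d`. -/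
theorem ZnPerp_mem_iff_and_tendsto_trivial :
    (∀ n : ℕ, 0 < n → ∀ r s : ℝ,
      ((r, Td.ofCircle (s : AddCircle (1 : ℝ))) ∈ ZnPerp n ↔ ∃ m : ℤ, r / n - s = m)) ∧
    ChabautyTendstoSet ZnPerp atTop ({0} : Set (ℝ × Td)) := by
  constructor
  · intro n hn r s
    rw [mem_ZnPerp_iff]
    have hid : idChar (Td.ofCircle (s : AddCircle (1 : ℝ))) = (s : AddCircle (1 : ℝ)) := rfl
    rw [hid, QuotientAddGroup.eq_iff_sub_mem, div_eq_mul_inv]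
    constructor
    · intro h
      obtain ⟨m, hm⟩ := AddSubgroup.mem_zmultiples_iff.mp h
      exact ⟨m, by rw [← hm, zsmul_eq_mul, mul_one]⟩
    · rintro ⟨m, hm⟩
      exact AddSubgroup.mem_zmultiples_iff.mpr ⟨m, by rw [zsmul_eq_mul, mul_one, hm]⟩
  · intro K hK W hW
    -- bound on first coordinates
    obtain ⟨C, hC⟩ : ∃ C : ℝ, ∀ p ∈ K, |p.1| ≤ C := by
      obtain ⟨R, hR⟩ := (hK.image continuous_fst).isBounded.exists_norm_le
      exact ⟨R, fun p hp => by
        simpa [Real.norm_eq_abs] using hR p.1 (Set.mem_image_of_mem _ hp)⟩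
    -- the set of second coordinates is finite
    have hS : (Prod.snd '' K).Finite := (hK.image continuous_snd).finite_of_discrete
    have key : ∀ t ∈ Prod.snd '' K, ∀ᶠ n : ℕ in atTop,
        ∀ r : ℝ, |r| ≤ C → (r, t) ∈ ZnPerp n → r = 0 ∧ t = 0 := by
      intro t _
      by_cases ht : idChar t = 0
      · -- t = 0 case
        have ht0 : t = 0 := ht
        filter_upwards [eventually_gt_atTop (max 0 ⌈C⌉₊)] with n hn r hr hmem
        have hn0 : 0 < n := lt_of_le_of_lt (le_max_left _ _) hn
        have hnC : C < (n : ℝ) := by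
          have : C ≤ (⌈C⌉₊ : ℝ) := Nat.le_ceil C
          have h2 : (⌈C⌉₊ : ℝ) < n := by
            exact_mod_cast lt_of_le_of_lt (le_max_right _ _) hn
          linarith
        rw [mem_ZnPerp_iff, ht] at hmem
        obtain ⟨m, hm⟩ := (coe_eq_zero_iff' _).mp hmem
        have hnpos : (0 : ℝ) < n := by exact_mod_cast hn0
        have habs : |(m : ℝ)| < 1 := by
          rw [hm, abs_mul, abs_inv, abs_of_pos hnpos]
          calc |r| * (n : ℝ)⁻¹ ≤ C * (n : ℝ)⁻¹ :=
                mul_le_mul_of_nonneg_right hr (by positivity)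
              _ < (n : ℝ) * (n : ℝ)⁻¹ :=
                mul_lt_mul_of_pos_right hnC (by positivity)
              _ = 1 := mul_inv_cancel₀ (ne_of_gt hnpos)
        have hm0 : m = 0 := by
          have h2 : |m| < 1 := by exact_mod_cast habs
          have := abs_lt.mp h2
          omega
        refine ⟨?_, ht0⟩
        have : r * (n : ℝ)⁻¹ = 0 := by rw [← hm, hm0]; simp
        rcases mul_eq_zero.mp this with h | h
        · exact h
        · exact absurd h (inv_ne_zero (ne_of_gt hnpos))
      · -- t ≠ 0 case : eventually vacuous
        obtain ⟨δ, hδ, hδ'⟩ := exists_delta ht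
        filter_upwards [eventually_gt_atTop (max 0 ⌈C / δ⌉₊)] with n hn r hr hmem
        exfalso
        have hn0 : 0 < n := lt_of_le_of_lt (le_max_left _ _) hn
        have hnpos : (0 : ℝ) < n := by exact_mod_cast hn0
        have hnC : C / δ < (n : ℝ) := by
          have : C / δ ≤ (⌈C / δ⌉₊ : ℝ) := Nat.le_ceil _
          have h2 : (⌈C / δ⌉₊ : ℝ) < n := by
            exact_mod_cast lt_of_le_of_lt (le_max_right _ _) hn
          linarith
        rw [mem_ZnPerp_iff] at hmem
        have hge := hδ' _ hmem
        rw [abs_mul, abs_inv, abs_of_pos hnpos] at hge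
        have hdn : δ * n ≤ |r| := by
          have h3 := mul_le_mul_of_nonneg_right hge (le_of_lt hnpos)
          rwa [mul_assoc, inv_mul_cancel₀ (ne_of_gt hnpos), mul_one] at h3
        rw [div_lt_iff₀ hδ] at hnC
        nlinarith [hr, hdn]
    have keyall := (eventually_all_finite hS).mpr key
    filter_upwards [keyall] with n hn
    constructor
    · rintro p ⟨hp1, hp2⟩
      have hp : p.1 = 0 ∧ p.2 = 0 := by
        refine hn p.2 (Set.mem_image_of_mem _ hp2) p.1 (hC p hp2) ?_
        rwa [Prod.mk.eta]
      refine Set.mem_add.mpr ⟨0, mem_of_mem_nhds hW, 0, rfl, ?_⟩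
      rw [add_zero, Prod.ext_iff]
      exact ⟨hp.1.symm, hp.2.symm⟩
    · rintro p ⟨hp1, _⟩
      rcases hp1 with rfl
      refine Set.mem_add.mpr ⟨0, mem_of_mem_nhds hW, 0, ?_, by simp⟩
      rintro z ⟨k, rfl⟩
      simp only [Prod.smul_fst, Prod.smul_snd]
      rw [zsmul_apply]
      show (((0 : ℝ × Td).1 * _ : ℝ) : AddCircle (1 : ℝ)) - _ = 0
      simp [map_zero]
end
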